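/- Let E be a real inner product space, n ≥ 1, let x : Fin n → E and y : Fin n → ℝ satisfy ‖x_i‖ ≤ 1 and |y_i| ≤ 1 for all i. Let S₁, S₁* ⊆ Fin n be finite subsets, θ, θ* ∈ E, and γ ≥ 0, ρ ≥ 0, μ ≥ 0 satisfy: (i) 2γ·|S₁| ≤ n; (ii) Σ_{i ∈ S₁} ⟨x_i, v⟩² ≥ ρ · n · ‖v‖² for all v ∈ E; (iii) ‖2(y_i − ⟨x_i, θ*⟩) x_i‖ ≤ μ for every i ∈ S₁*. Define θ⁺ = θ + (2γ/n) Σ_{i ∈ S₁} (y_i − ⟨x_i, θ⟩) x_i. Then ‖θ⁺ − θ*‖ ≤ (1 − 2γρ) · ‖θ − θ*‖ + (γ/n) · ( |S₁ ∩ S₁*| · μ + 2 · |S₁ \ S₁*| · (‖θ*‖ + 1) ). -/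
import Mathlib


open scoped RealInnerProductSpace

/-- Cauchy–Schwarz for a positive semidefinite symmetric bilinear form. -/
lemma cs_form {E : Type*} [AddCommGroup E] [Module ℝ E] (C : E → E → ℝ)
    (hsymm : ∀ u v, C u v = C v u)
    (hadd : ∀ u v w, C (u + v) w = C u w + C v w)
    (hsmul : ∀ (t : ℝ) (u w : E), C (t • u) w = t * C u w)
    (hpos : ∀ u, 0 ≤ C u u) (u w : E) :
    C u w ^ 2 ≤ C u u * C w w := by
  have haddr : ∀ a b c : E, C a (b + c) = C a b + C a c := fun a b c => by
    rw [hsymm, hadd, hsymm b a, hsymm c a]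
  have hsmulr : ∀ (t : ℝ) (a b : E), C a (t • b) = t * C a b := fun t a b => by
    rw [hsymm, hsmul, hsymm]
  have key : ∀ t : ℝ, 0 ≤ C w w * (t * t) + (2 * C u w) * t + C u u := by
    intro t
    have h0 := hpos (u + t • w)
    rw [hadd, haddr, haddr, hsmul, hsmulr, hsmulr, hsmul, hsymm w u] at h0
    nlinarith [h0]
  have hd := discrim_le_zero key
  rw [discrim] at hd
  nlinarith [hd]

set_option maxHeartbeats 1000000 in
/-- Deterministic per-iteration error bound for one gradient-AM step: contraction plus
bias/misclassification terms. -/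
theorem stmt_10 {E : Type*} [NormedAddCommGroup E] [InnerProductSpace ℝ E]
    (n : ℕ) (hn : 1 ≤ n) (x : Fin n → E) (y : Fin n → ℝ)
    (hx : ∀ i, ‖x i‖ ≤ 1) (hy : ∀ i, |y i| ≤ 1)
    (S₁ S₁s : Finset (Fin n)) (θ θs : E)
    (γ ρ μ : ℝ) (hγ : 0 ≤ γ) (hρ : 0 ≤ ρ) (hμ : 0 ≤ μ)
    (hstep : 2 * γ * S₁.card ≤ n)
    (heig : ∀ v : E, ρ * n * ‖v‖ ^ 2 ≤ ∑ i ∈ S₁, ⟪x i, v⟫ ^ 2)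
    (hbias : ∀ i ∈ S₁s, ‖(2 * (y i - ⟪x i, θs⟫)) • x i‖ ≤ μ) :
    ‖(θ + (2 * γ / n) • ∑ i ∈ S₁, (y i - ⟪x i, θ⟫) • x i) - θs‖ ≤
      (1 - 2 * γ * ρ) * ‖θ - θs‖ +
        (γ / n) * ((S₁ ∩ S₁s).card * μ + 2 * (S₁ \ S₁s).card * (‖θs‖ + 1)) := by
  have hn0 : (0:ℝ) < n := by exact_mod_cast hn
  set g : ℝ := 2 * γ / n with hgdef
  have hg0 : 0 ≤ g := by positivity
  have hgn : g * n = 2 * γ := by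
    rw [hgdef]; field_simp
  have hgcard : g * S₁.card ≤ 1 := by
    have h1 : g * S₁.card = 2 * γ * S₁.card / n := by rw [hgdef]; ring
    rw [h1, div_le_one hn0]; exact hstep
  set C : E → E → ℝ := fun u w => ⟪u, w⟫ - g * ∑ i ∈ S₁, ⟪x i, u⟫ * ⟪x i, w⟫ with hCdef
  have hsymm : ∀ u v, C u v = C v u := by
    intro u v
    have h : ∑ i ∈ S₁, ⟪x i, u⟫ * ⟪x i, v⟫ = ∑ i ∈ S₁, ⟪x i, v⟫ * ⟪x i, u⟫ :=
      Finset.sum_congr rfl fun i _ => mul_comm _ _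
    simp only [hCdef]
    rw [real_inner_comm, h]
  have hadd : ∀ u v w, C (u + v) w = C u w + C v w := by
    intro u v w
    simp only [hCdef, inner_add_left, inner_add_right, add_mul, Finset.sum_add_distrib, mul_add]
    ring
  have hsmul : ∀ (t : ℝ) (u w : E), C (t • u) w = t * C u w := by
    intro t u w
    simp only [hCdef, real_inner_smul_left, real_inner_smul_right, mul_assoc, ← Finset.mul_sum]
    ring
  have hsq : ∀ (u : E) (i : Fin n), ⟪x i, u⟫ * ⟪x i, u⟫ ≤ ‖u‖ ^ 2 := by
    intro u i
    have h1 := abs_real_inner_le_norm (x i) u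
    have h2 : ‖x i‖ * ‖u‖ ≤ 1 * ‖u‖ :=
      mul_le_mul_of_nonneg_right (hx i) (norm_nonneg u)
    nlinarith [abs_nonneg ⟪x i, u⟫, sq_abs ⟪x i, u⟫, norm_nonneg u]
  have hsum_le : ∀ u : E, ∑ i ∈ S₁, ⟪x i, u⟫ * ⟪x i, u⟫ ≤ (S₁.card : ℝ) * ‖u‖ ^ 2 := by
    intro u
    calc ∑ i ∈ S₁, ⟪x i, u⟫ * ⟪x i, u⟫ ≤ ∑ _i ∈ S₁, ‖u‖ ^ 2 :=
          Finset.sum_le_sum fun i _ => hsq u i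
      _ = (S₁.card : ℝ) * ‖u‖ ^ 2 := by rw [Finset.sum_const, nsmul_eq_mul]
  have hpos : ∀ u, 0 ≤ C u u := by
    intro u
    simp only [hCdef]
    have h1 := hsum_le u
    have h2 : g * ∑ i ∈ S₁, ⟪x i, u⟫ * ⟪x i, u⟫ ≤ g * ((S₁.card : ℝ) * ‖u‖ ^ 2) :=
      mul_le_mul_of_nonneg_left h1 hg0
    have h3 : g * ((S₁.card : ℝ) * ‖u‖ ^ 2) ≤ ‖u‖ ^ 2 := by
      nlinarith [sq_nonneg ‖u‖, hgcard]
    rw [real_inner_self_eq_norm_sq]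
    linarith
  have hCw : ∀ w : E, C w w ≤ (1 - 2 * γ * ρ) * ‖w‖ ^ 2 := by
    intro w
    simp only [hCdef, real_inner_self_eq_norm_sq]
    have h1 := heig w
    have h2 : ∑ i ∈ S₁, ⟪x i, w⟫ * ⟪x i, w⟫ = ∑ i ∈ S₁, ⟪x i, w⟫ ^ 2 := by
      simp [sq]
    rw [h2]
    have h4 := mul_le_mul_of_nonneg_left h1 hg0
    have h3 : g * (ρ * (n:ℝ) * ‖w‖ ^ 2) = 2 * γ * ρ * ‖w‖ ^ 2 := by rw [← hgn]; ring
    linarith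
  have hBinner : ∀ u w : E, ⟪u - g • ∑ i ∈ S₁, ⟪x i, u⟫ • x i, w⟫ = C u w := by
    intro u w
    simp only [hCdef, inner_sub_left, real_inner_smul_left, sum_inner]
  set b : E := (θ - θs) - g • ∑ i ∈ S₁, ⟪x i, θ - θs⟫ • x i with hbdef
  have hbC : ‖b‖ ^ 2 = C (θ - θs) b := by
    rw [← real_inner_self_eq_norm_sq]
    conv_lhs => rw [hbdef]
    exact hBinner _ _
  have hcs := cs_form C hsymm hadd hsmul hpos (θ - θs) b
  have hbnorm : ‖b‖ ≤ (1 - 2 * γ * ρ) * ‖θ - θs‖ := by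
    by_cases hΔ : θ - θs = 0
    · have hb0 : b = 0 := by
        rw [hbdef, hΔ]
        simp
      rw [hb0, hΔ]
      simp
    · have hΔn : 0 < ‖θ - θs‖ := norm_pos_iff.mpr hΔ
      have hsum2 : ∑ i ∈ S₁, ⟪x i, θ - θs⟫ ^ 2 ≤ (S₁.card : ℝ) * ‖θ - θs‖ ^ 2 := by
        have := hsum_le (θ - θs)
        have h2 : ∑ i ∈ S₁, ⟪x i, θ - θs⟫ * ⟪x i, θ - θs⟫
            = ∑ i ∈ S₁, ⟪x i, θ - θs⟫ ^ 2 := by simp [sq]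
        linarith [h2 ▸ this]
      have hρcard : ρ * n ≤ (S₁.card : ℝ) := by
        have h1 := heig (θ - θs)
        nlinarith [h1, hsum2, mul_pos hΔn hΔn, sq_nonneg ‖θ - θs‖, pow_pos hΔn 2]
      have hc0 : 0 ≤ 1 - 2 * γ * ρ := by
        nlinarith [mul_le_mul_of_nonneg_left hρcard (by linarith : (0:ℝ) ≤ 2 * γ)]
      have hb4 : (‖b‖ ^ 2) ^ 2 ≤ ((1 - 2*γ*ρ) * ‖θ - θs‖ ^ 2) * ((1 - 2*γ*ρ) * ‖b‖ ^ 2) := by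
        calc (‖b‖ ^ 2) ^ 2 = C (θ - θs) b ^ 2 := by rw [hbC]
          _ ≤ C (θ - θs) (θ - θs) * C b b := hcs
          _ ≤ ((1 - 2*γ*ρ) * ‖θ - θs‖ ^ 2) * ((1 - 2*γ*ρ) * ‖b‖ ^ 2) := by
              apply mul_le_mul (hCw _) (hCw _) (hpos b)
              positivity
      by_cases hb0 : ‖b‖ = 0
      · rw [hb0]; positivity
      · have hbpos : 0 < ‖b‖ := lt_of_le_of_ne (norm_nonneg b) (Ne.symm hb0)
        have h2 : ‖b‖ ^ 2 ≤ ((1 - 2*γ*ρ) * ‖θ - θs‖) ^ 2 := by nlinarith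
        nlinarith [mul_nonneg hc0 (norm_nonneg (θ - θs)), hbpos]
  have hsumid : ∑ i ∈ S₁, (y i - ⟪x i, θ⟫) • x i
      = (∑ i ∈ S₁, (y i - ⟪x i, θs⟫) • x i) - ∑ i ∈ S₁, ⟪x i, θ - θs⟫ • x i := by
    rw [← Finset.sum_sub_distrib]
    refine Finset.sum_congr rfl fun i _ => ?_
    rw [← sub_smul, inner_sub_right]
    congr 1
    ring
  have hdecomp : (θ + g • ∑ i ∈ S₁, (y i - ⟪x i, θ⟫) • x i) - θs
      = b + g • ∑ i ∈ S₁, (y i - ⟪x i, θs⟫) • x i := by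
    rw [hsumid, hbdef, smul_sub]
    abel
  have hR : ‖g • ∑ i ∈ S₁, (y i - ⟪x i, θs⟫) • x i‖
      ≤ g * (((S₁ ∩ S₁s).card : ℝ) * (μ / 2) + ((S₁ \ S₁s).card : ℝ) * (‖θs‖ + 1)) := by
    rw [norm_smul, Real.norm_eq_abs, abs_of_nonneg hg0]
    apply mul_le_mul_of_nonneg_left _ hg0
    calc ‖∑ i ∈ S₁, (y i - ⟪x i, θs⟫) • x i‖
        ≤ ∑ i ∈ S₁, ‖(y i - ⟪x i, θs⟫) • x i‖ := norm_sum_le _ _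
      _ = (∑ i ∈ S₁ ∩ S₁s, ‖(y i - ⟪x i, θs⟫) • x i‖)
          + ∑ i ∈ S₁ \ S₁s, ‖(y i - ⟪x i, θs⟫) • x i‖ :=
            (Finset.sum_inter_add_sum_sdiff S₁ S₁s _).symm
      _ ≤ ((S₁ ∩ S₁s).card : ℝ) * (μ / 2) + ((S₁ \ S₁s).card : ℝ) * (‖θs‖ + 1) := by
          apply add_le_add
          · have h1 : ∀ i ∈ S₁ ∩ S₁s, ‖(y i - ⟪x i, θs⟫) • x i‖ ≤ μ / 2 := by
              intro i hi
              have hi2 : i ∈ S₁s := (Finset.mem_inter.mp hi).2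
              have hb := hbias i hi2
              have he : (2 * (y i - ⟪x i, θs⟫)) • x i
                  = (2:ℝ) • ((y i - ⟪x i, θs⟫) • x i) := by
                rw [smul_smul]
              rw [he, norm_smul, Real.norm_eq_abs] at hb
              rw [abs_of_nonneg (by norm_num : (0:ℝ) ≤ 2)] at hb
              linarith
            calc ∑ i ∈ S₁ ∩ S₁s, ‖(y i - ⟪x i, θs⟫) • x i‖
                ≤ ∑ _i ∈ S₁ ∩ S₁s, (μ / 2) := Finset.sum_le_sum h1
              _ = ((S₁ ∩ S₁s).card : ℝ) * (μ / 2) := by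
                  rw [Finset.sum_const, nsmul_eq_mul]
          · have h2 : ∀ i ∈ S₁ \ S₁s, ‖(y i - ⟪x i, θs⟫) • x i‖ ≤ ‖θs‖ + 1 := by
              intro i _
              rw [norm_smul, Real.norm_eq_abs]
              have ha : |y i - ⟪x i, θs⟫| ≤ |y i| + |⟪x i, θs⟫| := abs_sub _ _
              have hb2 : |⟪x i, θs⟫| ≤ ‖x i‖ * ‖θs‖ := abs_real_inner_le_norm _ _
              have hc2 : ‖x i‖ * ‖θs‖ ≤ 1 * ‖θs‖ :=
                mul_le_mul_of_nonneg_right (hx i) (norm_nonneg θs)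
              nlinarith [hx i, hy i, norm_nonneg (x i), abs_nonneg (y i - ⟪x i, θs⟫),
                norm_nonneg θs]
            calc ∑ i ∈ S₁ \ S₁s, ‖(y i - ⟪x i, θs⟫) • x i‖
                ≤ ∑ _i ∈ S₁ \ S₁s, (‖θs‖ + 1) := Finset.sum_le_sum h2
              _ = ((S₁ \ S₁s).card : ℝ) * (‖θs‖ + 1) := by
                  rw [Finset.sum_const, nsmul_eq_mul]
  have hfinal : g * (((S₁ ∩ S₁s).card : ℝ) * (μ / 2) + ((S₁ \ S₁s).card : ℝ) * (‖θs‖ + 1))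
      = (γ / n) * (((S₁ ∩ S₁s).card : ℝ) * μ + 2 * ((S₁ \ S₁s).card : ℝ) * (‖θs‖ + 1)) := by
    rw [hgdef]; ring
  calc ‖(θ + g • ∑ i ∈ S₁, (y i - ⟪x i, θ⟫) • x i) - θs‖
      = ‖b + g • ∑ i ∈ S₁, (y i - ⟪x i, θs⟫) • x i‖ := by rw [hdecomp]
    _ ≤ ‖b‖ + ‖g • ∑ i ∈ S₁, (y i - ⟪x i, θs⟫) • x i‖ := norm_add_le _ _
    _ ≤ (1 - 2 * γ * ρ) * ‖θ - θs‖ +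
        (γ / n) * (((S₁ ∩ S₁s).card : ℝ) * μ + 2 * ((S₁ \ S₁s).card : ℝ) * (‖θs‖ + 1)) := by
        rw [← hfinal]
        exact add_le_add hbnorm hR
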